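/- Let λ>0, ν∈ℝ, and let w:[0,1]→[0,1] be defined by w(p) = Φ((Φ⁻¹(p)+ν)/λ) for p∈(0,1), w(0)=0, w(1)=1, where Φ⁻¹ is the inverse of the standard normal cdf Φ. Set z₀ = ν/(λ²−1) when λ ≠ 1. Then: (a) if λ>1, w is strictly concave on (0,Φ(z₀)) and strictly convex on (Φ(z₀),1); (b) if λ∈(0,1), w is strictly convex on (0,Φ(z₀)) and strictly concave on (Φ(z₀),1); (c) if λ=1 and ν>0, w is strictly concave on (0,1); (d) if λ=1 and ν<0, w is strictly convex on (0,1). -/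

import Mathlib

open MeasureTheory Set Filter Topology

/-- The standard normal density φ. -/
noncomputable def stdGaussianPdf (z : ℝ) : ℝ :=
  (Real.sqrt (2 * Real.pi))⁻¹ * Real.exp (-(z ^ 2) / 2)

/-- The standard normal cumulative distribution function Φ. -/
noncomputable def stdGaussianCdf (x : ℝ) : ℝ :=
  ∫ z in Set.Iic x, stdGaussianPdf z

lemma sqrt2pi_pos : 0 < Real.sqrt (2 * Real.pi) :=
  Real.sqrt_pos.2 (by positivity)

lemma stdGaussianPdf_pos (z : ℝ) : 0 < stdGaussianPdf z := by
  unfold stdGaussianPdf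
  positivity

lemma stdGaussianPdf_continuous : Continuous stdGaussianPdf := by
  unfold stdGaussianPdf
  fun_prop

lemma stdGaussianPdf_eq : stdGaussianPdf = fun z =>
    (Real.sqrt (2 * Real.pi))⁻¹ * Real.exp (-(2⁻¹ : ℝ) * z ^ 2) := by
  funext z
  unfold stdGaussianPdf
  congr 1
  ring_nf

lemma stdGaussianPdf_integrable : Integrable stdGaussianPdf := by
  rw [stdGaussianPdf_eq]
  exact (integrable_exp_neg_mul_sq (by norm_num : (0:ℝ) < 2⁻¹)).const_mul _

lemma stdGaussianPdf_total : ∫ z, stdGaussianPdf z = 1 := by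
  rw [stdGaussianPdf_eq]
  rw [MeasureTheory.integral_const_mul, integral_gaussian]
  rw [show Real.pi / 2⁻¹ = 2 * Real.pi by ring]
  exact inv_mul_cancel₀ (ne_of_gt sqrt2pi_pos)

lemma hasDerivAt_stdGaussianCdf (x : ℝ) :
    HasDerivAt stdGaussianCdf (stdGaussianPdf x) x := by
  have hint := stdGaussianPdf_integrable
  have key : stdGaussianCdf = fun y =>
      stdGaussianCdf 0 + ∫ t in (0:ℝ)..y, stdGaussianPdf t := by
    funext y
    have h := intervalIntegral.integral_Iic_sub_Iic (hint.integrableOn)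
      (hint.integrableOn) (a := (0:ℝ)) (b := y)
    unfold stdGaussianCdf
    linarith [h]
  rw [key]
  exact (intervalIntegral.integral_hasDerivAt_right
    (stdGaussianPdf_continuous.intervalIntegrable _ _)
    (stdGaussianPdf_continuous.stronglyMeasurableAtFilter _ _)
    stdGaussianPdf_continuous.continuousAt).const_add _

lemma stdGaussianCdf_strictMono : StrictMono stdGaussianCdf :=
  strictMono_of_deriv_pos fun x => by
    rw [(hasDerivAt_stdGaussianCdf x).deriv]; exact stdGaussianPdf_pos x

lemma stdGaussianCdf_pos (x : ℝ) : 0 < stdGaussianCdf x := by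
  have hint := stdGaussianPdf_integrable
  have h := intervalIntegral.integral_Iic_sub_Iic (hint.integrableOn)
    (hint.integrableOn) (a := x - 1) (b := x)
  have h1 : (0:ℝ) ≤ stdGaussianCdf (x - 1) :=
    MeasureTheory.setIntegral_nonneg measurableSet_Iic fun z _ => (stdGaussianPdf_pos z).le
  have h2 : 0 < ∫ t in (x-1)..x, stdGaussianPdf t :=
    intervalIntegral.intervalIntegral_pos_of_pos
      (stdGaussianPdf_continuous.intervalIntegrable _ _) stdGaussianPdf_pos (by linarith)
  unfold stdGaussianCdf at *
  linarith

lemma stdGaussianCdf_lt_one (x : ℝ) : stdGaussianCdf x < 1 := by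
  have h1 : stdGaussianCdf x < stdGaussianCdf (x + 1) :=
    stdGaussianCdf_strictMono (by linarith)
  have h2 : stdGaussianCdf (x + 1) ≤ 1 := by
    rw [← stdGaussianPdf_total]
    exact MeasureTheory.setIntegral_le_integral stdGaussianPdf_integrable
      (Filter.Eventually.of_forall fun z => (stdGaussianPdf_pos z).le)
  linarith

lemma stdGaussianCdf_mem_Ioo (x : ℝ) : stdGaussianCdf x ∈ Set.Ioo (0:ℝ) 1 :=
  ⟨stdGaussianCdf_pos x, stdGaussianCdf_lt_one x⟩

/-- shape of `w(p) = Φ((Φ⁻¹(p)+ν)/λ)`, with `z₀ = ν/(λ²−1)` when `λ ≠ 1`: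
(a) if `λ>1`, `w` is strictly concave on `(0,Φ(z₀))` and strictly convex on `(Φ(z₀),1)`;
(b) if `λ∈(0,1)`, `w` is strictly convex on `(0,Φ(z₀))` and strictly concave on `(Φ(z₀),1)`;
(c) if `λ=1` and `ν>0`, `w` is strictly concave on `(0,1)`;
(d) if `λ=1` and `ν<0`, `w` is strictly convex on `(0,1)`. -/
theorem stmt4 (lam ν : ℝ) (hlam : 0 < lam)
    (Φinv : ℝ → ℝ)
    (hΦinv : ∀ z : ℝ, Φinv (stdGaussianCdf z) = z)
    (hΦinv' : ∀ p ∈ Set.Ioo (0:ℝ) 1, stdGaussianCdf (Φinv p) = p)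
    (w : ℝ → ℝ)
    (hwdef : ∀ p ∈ Set.Ioo (0:ℝ) 1, w p = stdGaussianCdf ((Φinv p + ν) / lam))
    (hw0 : w 0 = 0) (hw1 : w 1 = 1) :
    (1 < lam →
        StrictConcaveOn ℝ (Set.Ioo 0 (stdGaussianCdf (ν / (lam ^ 2 - 1)))) w ∧
        StrictConvexOn ℝ (Set.Ioo (stdGaussianCdf (ν / (lam ^ 2 - 1))) 1) w) ∧
    (lam < 1 →
        StrictConvexOn ℝ (Set.Ioo 0 (stdGaussianCdf (ν / (lam ^ 2 - 1)))) w ∧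
        StrictConcaveOn ℝ (Set.Ioo (stdGaussianCdf (ν / (lam ^ 2 - 1))) 1) w) ∧
    (lam = 1 → 0 < ν → StrictConcaveOn ℝ (Set.Ioo 0 1) w) ∧
    (lam = 1 → ν < 0 → StrictConvexOn ℝ (Set.Ioo 0 1) w) := by
  have hlamne : lam ≠ 0 := ne_of_gt hlam
  -- Φinv strictly monotone on (0,1)
  have hΦinvMono : StrictMonoOn Φinv (Set.Ioo (0:ℝ) 1) := by
    intro x hx y hy hxy
    apply stdGaussianCdf_strictMono.lt_iff_lt.1
    rw [hΦinv' x hx, hΦinv' y hy]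
    exact hxy
  -- Φinv continuous on (0,1)
  have hΦinvCont : ∀ p ∈ Set.Ioo (0:ℝ) 1, ContinuousAt Φinv p := by
    intro p hp
    refine continuousAt_of_monotoneOn_of_image_mem_nhds hΦinvMono.monotoneOn
      (isOpen_Ioo.mem_nhds hp) ?_
    have himg : Φinv '' (Set.Ioo (0:ℝ) 1) = Set.univ := by
      apply Set.eq_univ_of_forall
      intro z
      exact ⟨stdGaussianCdf z, stdGaussianCdf_mem_Ioo z, hΦinv z⟩
    rw [himg]
    exact Filter.univ_mem
  -- derivative of Φinv
  have hΦinvDeriv : ∀ p ∈ Set.Ioo (0:ℝ) 1,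
      HasDerivAt Φinv (stdGaussianPdf (Φinv p))⁻¹ p := by
    intro p hp
    refine HasDerivAt.of_local_left_inverse (hΦinvCont p hp)
      (hasDerivAt_stdGaussianCdf (Φinv p)) (ne_of_gt (stdGaussianPdf_pos _)) ?_
    filter_upwards [isOpen_Ioo.mem_nhds hp] with q hq using hΦinv' q hq
  set D : ℝ → ℝ := fun z => stdGaussianPdf ((z + ν) / lam) * ((stdGaussianPdf z)⁻¹ / lam)
    with hD
  -- derivative of w
  have hwDeriv : ∀ p ∈ Set.Ioo (0:ℝ) 1, HasDerivAt w (D (Φinv p)) p := by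
    intro p hp
    have hg : HasDerivAt (fun q => (Φinv q + ν) / lam)
        ((stdGaussianPdf (Φinv p))⁻¹ / lam) p :=
      ((hΦinvDeriv p hp).add_const ν).div_const lam
    have hc := (hasDerivAt_stdGaussianCdf ((Φinv p + ν) / lam)).comp p hg
    refine HasDerivAt.congr_of_eventuallyEq hc ?_
    filter_upwards [isOpen_Ioo.mem_nhds hp] with q hq
    simpa [Function.comp] using hwdef q hq
  have hwderiv' : ∀ p ∈ Set.Ioo (0:ℝ) 1, deriv w p = D (Φinv p) :=
    fun p hp => (hwDeriv p hp).deriv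
  have hwCont : ContinuousOn w (Set.Ioo (0:ℝ) 1) :=
    fun p hp => (hwDeriv p hp).continuousAt.continuousWithinAt
  -- rewrite D as lam⁻¹ * exp(h)
  set hfun : ℝ → ℝ := fun z => z ^ 2 / 2 - ((z + ν) / lam) ^ 2 / 2 with hhfun
  have hk : (Real.sqrt (2 * Real.pi)) ≠ 0 := ne_of_gt sqrt2pi_pos
  have hDkey : ∀ a b : ℝ, (Real.sqrt (2 * Real.pi))⁻¹ * Real.exp a *
      (((Real.sqrt (2 * Real.pi))⁻¹ * Real.exp b)⁻¹ / lam) = lam⁻¹ * Real.exp (a - b) := by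
    intro a b
    rw [Real.exp_sub]
    field_simp
  have hDeq : ∀ z, D z = lam⁻¹ * Real.exp (hfun z) := by
    intro z
    simp only [hD, stdGaussianPdf]
    rw [hDkey]
    congr 1
    simp only [hhfun]
    ring
  have hfunDeriv : ∀ z, HasDerivAt hfun (z - (z + ν) / lam ^ 2) z := by
    intro z
    have h1 : HasDerivAt (fun z : ℝ => z ^ 2 / 2) z z := by
      simpa using (hasDerivAt_pow 2 z).div_const 2
    have h2 : HasDerivAt (fun z : ℝ => ((z + ν) / lam) ^ 2 / 2) ((z + ν) / lam ^ 2) z := by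
      have hi : HasDerivAt (fun z : ℝ => (z + ν) / lam) (1 / lam) z :=
        ((hasDerivAt_id z).add_const ν).div_const lam
      have := (hi.pow 2).div_const 2
      refine this.congr_deriv ?_
      norm_num
      field_simp
    exact h1.sub h2
  have hfunCont : Continuous hfun :=
    continuous_iff_continuousAt.2 fun z => (hfunDeriv z).differentiableAt.continuousAt
  -- generic monotonicity lemmas for D
  have Dmono : ∀ T : Set ℝ, Convex ℝ T →
      (∀ z ∈ interior T, 0 < z - (z + ν) / lam ^ 2) → StrictMonoOn D T := by
    intro T hT hpos
    have hm : StrictMonoOn hfun T :=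
      strictMonoOn_of_deriv_pos hT hfunCont.continuousOn fun z hz => by
        rw [(hfunDeriv z).deriv]; exact hpos z hz
    intro x hx y hy hxy
    rw [hDeq, hDeq]
    exact mul_lt_mul_of_pos_left (Real.exp_lt_exp.2 (hm hx hy hxy)) (inv_pos.2 hlam)
  have Danti : ∀ T : Set ℝ, Convex ℝ T →
      (∀ z ∈ interior T, z - (z + ν) / lam ^ 2 < 0) → StrictAntiOn D T := by
    intro T hT hneg
    have hm : StrictAntiOn hfun T :=
      strictAntiOn_of_deriv_neg hT hfunCont.continuousOn fun z hz => by
        rw [(hfunDeriv z).deriv]; exact hneg z hz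
    intro x hx y hy hxy
    rw [hDeq, hDeq]
    exact mul_lt_mul_of_pos_left (Real.exp_lt_exp.2 (hm hx hy hxy)) (inv_pos.2 hlam)
  -- generic convexity lemmas for w
  have key_convex : ∀ (A B : ℝ) (T : Set ℝ), Set.Ioo A B ⊆ Set.Ioo (0:ℝ) 1 →
      (∀ p ∈ Set.Ioo A B, Φinv p ∈ T) → StrictMonoOn D T →
      StrictConvexOn ℝ (Set.Ioo A B) w := by
    intro A B T hsub hT hmono
    refine StrictMonoOn.strictConvexOn_of_deriv (convex_Ioo A B) (hwCont.mono hsub) ?_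
    rw [interior_Ioo]
    intro x hx y hy hxy
    rw [hwderiv' x (hsub hx), hwderiv' y (hsub hy)]
    exact hmono (hT x hx) (hT y hy) (hΦinvMono (hsub hx) (hsub hy) hxy)
  have key_concave : ∀ (A B : ℝ) (T : Set ℝ), Set.Ioo A B ⊆ Set.Ioo (0:ℝ) 1 →
      (∀ p ∈ Set.Ioo A B, Φinv p ∈ T) → StrictAntiOn D T →
      StrictConcaveOn ℝ (Set.Ioo A B) w := by
    intro A B T hsub hT hanti
    refine StrictAntiOn.strictConcaveOn_of_deriv (convex_Ioo A B) (hwCont.mono hsub) ?_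
    rw [interior_Ioo]
    intro x hx y hy hxy
    rw [hwderiv' x (hsub hx), hwderiv' y (hsub hy)]
    exact hanti (hT x hx) (hT y hy) (hΦinvMono (hsub hx) (hsub hy) hxy)
  -- sign rewriting
  have hsign : ∀ z : ℝ, z - (z + ν) / lam ^ 2 = ((lam ^ 2 - 1) * z - ν) / lam ^ 2 := by
    intro z; field_simp; ring
  -- membership helpers
  have hTlow : ∀ z₀ : ℝ, ∀ p ∈ Set.Ioo (0:ℝ) (stdGaussianCdf z₀), Φinv p ∈ Set.Iio z₀ := by
    intro z₀ p hp
    have hp' : p ∈ Set.Ioo (0:ℝ) 1 := ⟨hp.1, hp.2.trans (stdGaussianCdf_lt_one z₀)⟩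
    have : stdGaussianCdf (Φinv p) < stdGaussianCdf z₀ := by
      rw [hΦinv' p hp']; exact hp.2
    exact stdGaussianCdf_strictMono.lt_iff_lt.1 this
  have hThigh : ∀ z₀ : ℝ, ∀ p ∈ Set.Ioo (stdGaussianCdf z₀) 1, Φinv p ∈ Set.Ioi z₀ := by
    intro z₀ p hp
    have hp' : p ∈ Set.Ioo (0:ℝ) 1 := ⟨(stdGaussianCdf_pos z₀).trans hp.1, hp.2⟩
    have : stdGaussianCdf z₀ < stdGaussianCdf (Φinv p) := by
      rw [hΦinv' p hp']; exact hp.1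
    exact stdGaussianCdf_strictMono.lt_iff_lt.1 this
  have hsublow : ∀ z₀ : ℝ, Set.Ioo (0:ℝ) (stdGaussianCdf z₀) ⊆ Set.Ioo (0:ℝ) 1 :=
    fun z₀ p hp => ⟨hp.1, hp.2.trans (stdGaussianCdf_lt_one z₀)⟩
  have hsubhigh : ∀ z₀ : ℝ, Set.Ioo (stdGaussianCdf z₀) 1 ⊆ Set.Ioo (0:ℝ) 1 :=
    fun z₀ p hp => ⟨(stdGaussianCdf_pos z₀).trans hp.1, hp.2⟩
  refine ⟨?_, ?_, ?_, ?_⟩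
  · -- λ > 1
    intro h1
    have hc : (0:ℝ) < lam ^ 2 - 1 := by nlinarith
    set z₀ := ν / (lam ^ 2 - 1) with hz₀
    constructor
    · refine key_concave 0 (stdGaussianCdf z₀) (Set.Iio z₀) (hsublow z₀) (hTlow z₀) ?_
      refine Danti _ (convex_Iio z₀) ?_
      intro z hz
      rw [interior_Iio] at hz
      rw [hsign]
      apply div_neg_of_neg_of_pos _ (by positivity)
      have : z * (lam ^ 2 - 1) < ν := (lt_div_iff₀ hc).1 hz
      nlinarith
    · refine key_convex (stdGaussianCdf z₀) 1 (Set.Ioi z₀) (hsubhigh z₀) (hThigh z₀) ?_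
      refine Dmono _ (convex_Ioi z₀) ?_
      intro z hz
      rw [interior_Ioi] at hz
      rw [hsign]
      apply div_pos _ (by positivity)
      have : ν < z * (lam ^ 2 - 1) := (div_lt_iff₀ hc).1 hz
      nlinarith
  · -- λ < 1
    intro h1
    have hc : lam ^ 2 - 1 < 0 := by nlinarith
    set z₀ := ν / (lam ^ 2 - 1) with hz₀
    constructor
    · refine key_convex 0 (stdGaussianCdf z₀) (Set.Iio z₀) (hsublow z₀) (hTlow z₀) ?_
      refine Dmono _ (convex_Iio z₀) ?_
      intro z hz
      rw [interior_Iio] at hz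
      rw [hsign]
      apply div_pos _ (by positivity)
      have : ν < z * (lam ^ 2 - 1) := (lt_div_iff_of_neg hc).1 hz
      nlinarith
    · refine key_concave (stdGaussianCdf z₀) 1 (Set.Ioi z₀) (hsubhigh z₀) (hThigh z₀) ?_
      refine Danti _ (convex_Ioi z₀) ?_
      intro z hz
      rw [interior_Ioi] at hz
      rw [hsign]
      apply div_neg_of_neg_of_pos _ (by positivity)
      have : z * (lam ^ 2 - 1) < ν := (div_lt_iff_of_neg hc).1 hz
      nlinarith
  · -- λ = 1, ν > 0
    intro h1 hν
    refine key_concave 0 1 Set.univ (fun p hp => hp) (fun p _ => Set.mem_univ _) ?_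
    refine Danti _ convex_univ ?_
    intro z _
    rw [h1]
    norm_num
    linarith
  · -- λ = 1, ν < 0
    intro h1 hν
    refine key_convex 0 1 Set.univ (fun p hp => hp) (fun p _ => Set.mem_univ _) ?_
    refine Dmono _ convex_univ ?_
    intro z _
    rw [h1]
    norm_num
    linarith
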